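/- The soft monoid M_s, whose elements are pairs (n, f) with n ∈ ℕ and f a polynomial with natural-number coefficients, with (n,f) + (m,g) = (max(n,m), f+g), zero (0, 0), unit (0, 1), order (n,f) ≤ (m,g) iff n ≤ m and f(x) ≤ g(x) for all x ≥ m and (g−f) is monotone on [m, ∞), and measure ‖(n,f)‖ = f(n), is a quantitative monoid with unit. -/

import Mathlib

/-- Carrier of the soft monoid: pairs of a natural number and a polynomial over `ℕ`. -/
def SoftM : Type := ℕ × Polynomial ℕ

noncomputable def sadd (p q : SoftM) : SoftM := (max p.1 q.1, p.2 + q.2)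

noncomputable def szero : SoftM := (0, 0)

noncomputable def sone : SoftM := (0, 1)

def sle (p q : SoftM) : Prop :=
  p.1 ≤ q.1 ∧ (∀ x, q.1 ≤ x → p.2.eval x ≤ q.2.eval x) ∧
    (∀ x y, q.1 ≤ x → x ≤ y → q.2.eval x - p.2.eval x ≤ q.2.eval y - p.2.eval y)

def snorm (p : SoftM) : ℕ := p.2.eval p.1

lemma eval_mono_nat (f : Polynomial ℕ) {x y : ℕ} (h : x ≤ y) : f.eval x ≤ f.eval y := by
  rw [Polynomial.eval_eq_sum, Polynomial.eval_eq_sum]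
  unfold Polynomial.sum
  exact Finset.sum_le_sum fun i _ => Nat.mul_le_mul_left _ (Nat.pow_le_pow_left h i)

/-- The soft monoid is a quantitative monoid with unit. -/
theorem soft_monoid_is_quant_monoid_with_unit :
    (∀ p q r : SoftM, sadd p (sadd q r) = sadd (sadd p q) r) ∧
    (∀ p q : SoftM, sadd p q = sadd q p) ∧
    (∀ p : SoftM, sadd szero p = p) ∧
    (∀ p : SoftM, sle p p) ∧
    (∀ p q r : SoftM, sle p q → sle q r → sle p r) ∧
    (∀ p q : SoftM, snorm p + snorm q ≤ snorm (sadd p q)) ∧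
    (∀ p q : SoftM, sle p q → snorm p ≤ snorm q) ∧
    1 ≤ snorm sone := by
  refine ⟨?_, ?_, ?_, ?_, ?_, ?_, ?_, ?_⟩
  · intro p q r
    simp [sadd, Prod.ext_iff, max_assoc, add_assoc]
    rfl
  · intro p q
    simp [sadd, Prod.ext_iff, max_comm, add_comm]
    rfl
  · intro p
    simp [sadd, szero]
    rfl
  · intro p
    exact ⟨le_refl _, fun x _ => le_refl _, fun x y _ _ => by omega⟩
  · rintro p q r ⟨h1, h2, h3⟩ ⟨h1', h2', h3'⟩
    refine ⟨le_trans h1 h1', fun x hx => le_trans (h2 x (le_trans h1' hx)) (h2' x hx),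
      fun x y hx hxy => ?_⟩
    have hpx := h2 x (le_trans h1' hx)
    have hqx := h2' x hx
    have hpy := h2 y (le_trans h1' (le_trans hx hxy))
    have hqy := h2' y (le_trans hx hxy)
    have a := h3 x y (le_trans h1' hx) hxy
    have b := h3' x y hx hxy
    omega
  · intro p q
    have h1 : p.2.eval p.1 ≤ p.2.eval (max p.1 q.1) := eval_mono_nat _ (le_max_left _ _)
    have h2 : q.2.eval q.1 ≤ q.2.eval (max p.1 q.1) := eval_mono_nat _ (le_max_right _ _)
    simp only [snorm, sadd, Polynomial.eval_add]
    exact Nat.add_le_add h1 h2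
  · rintro p q ⟨h1, h2, _⟩
    exact le_trans (eval_mono_nat p.2 h1) (h2 q.1 le_rfl)
  · simp [snorm, sone]
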